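/- Let (M, μ) be a measure space with 0 < μ(M) < ∞, let α < 0 be a real number, and let κ : M → ℝ be measurable with κ > 0 μ-a.e., such that κ, κ^α and κ^{α+1} are integrable. If μ(M)·∫_M κ^{α+1} dμ = (∫_M κ dμ)·(∫_M κ^α dμ), then κ is constant μ-almost everywhere. -/

import Mathlib

open MeasureTheory

/-- Equality case (3.18): if μ(M) ∫ κ^{α+1} = (∫ κ)(∫ κ^α) for α < 0 and κ > 0 a.e.,
then κ is constant a.e. -/
theorem equality_case_implies_constant
    {M : Type*} [MeasurableSpace M] (μ : Measure M) [IsFiniteMeasure μ]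
    (hposμ : 0 < μ Set.univ)
    (α : ℝ) (hα : α < 0) (κ : M → ℝ) (hmeas : Measurable κ)
    (hpos : ∀ᵐ x ∂μ, 0 < κ x)
    (hκ : Integrable κ μ)
    (hκα : Integrable (fun x => κ x ^ α) μ)
    (hκα1 : Integrable (fun x => κ x ^ (α + 1)) μ)
    (heq : (μ Set.univ).toReal * (∫ x, κ x ^ (α + 1) ∂μ)
      = (∫ x, κ x ∂μ) * (∫ x, κ x ^ α ∂μ)) :
    ∃ c : ℝ, ∀ᵐ x ∂μ, κ x = c := by
  have hμne : μ ≠ 0 := by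
    intro h; rw [h] at hposμ; simp at hposμ
  haveI : Filter.NeBot (ae μ) := ae_neBot.mpr hμne
  -- positivity a.e. on the product
  have hpos1 : ∀ᵐ z ∂(μ.prod μ), 0 < κ z.1 :=
    Measure.quasiMeasurePreserving_fst.ae hpos
  have hpos2 : ∀ᵐ z ∂(μ.prod μ), 0 < κ z.2 :=
    Measure.quasiMeasurePreserving_snd.ae hpos
  -- the Chebyshev integrand
  set F : M × M → ℝ := fun z => (κ z.1 - κ z.2) * (κ z.1 ^ α - κ z.2 ^ α) with hF
  set G : M × M → ℝ := fun z =>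
    (κ z.1 ^ (α + 1) * 1 + 1 * κ z.2 ^ (α + 1))
      - (κ z.1 * κ z.2 ^ α + κ z.2 * κ z.1 ^ α) with hG
  have hFG : F =ᵐ[μ.prod μ] G := by
    filter_upwards [hpos1, hpos2] with z h1 h2
    have e1 : κ z.1 ^ (α + 1) = κ z.1 ^ α * κ z.1 := by
      rw [Real.rpow_add h1, Real.rpow_one]
    have e2 : κ z.2 ^ (α + 1) = κ z.2 ^ α * κ z.2 := by
      rw [Real.rpow_add h2, Real.rpow_one]
    simp only [hF, hG, e1, e2]
    ring
  -- integrability of G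
  have hconst : Integrable (fun _ : M => (1 : ℝ)) μ := integrable_const 1
  have hG1 : Integrable (fun z : M × M => κ z.1 ^ (α + 1) * 1) (μ.prod μ) :=
    hκα1.mul_prod hconst
  have hG2 : Integrable (fun z : M × M => 1 * κ z.2 ^ (α + 1)) (μ.prod μ) :=
    hconst.mul_prod hκα1
  have hG3 : Integrable (fun z : M × M => κ z.1 * κ z.2 ^ α) (μ.prod μ) :=
    hκ.mul_prod hκα
  have hG4 : Integrable (fun z : M × M => κ z.2 * κ z.1 ^ α) (μ.prod μ) :=
    hκα.mul_prod hκ |>.congr (Filter.Eventually.of_forall fun z => by ring)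
  have hGi : Integrable G (μ.prod μ) := ((hG1.add hG2).sub (hG3.add hG4))
  have hFi : Integrable F (μ.prod μ) := hGi.congr hFG.symm
  -- ∫ G = 0
  have hint1 : (∫ z, κ z.1 ^ (α + 1) * 1 ∂(μ.prod μ))
      = (∫ x, κ x ^ (α + 1) ∂μ) * (μ Set.univ).toReal := by
    have h := integral_prod_mul (μ := μ) (ν := μ)
      (fun x => κ x ^ (α + 1)) (fun _ => (1 : ℝ))
    simpa [Measure.real] using h
  have hint2 : (∫ z, (1 : ℝ) * κ z.2 ^ (α + 1) ∂(μ.prod μ))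
      = (μ Set.univ).toReal * (∫ x, κ x ^ (α + 1) ∂μ) := by
    have h := integral_prod_mul (μ := μ) (ν := μ)
      (fun _ => (1 : ℝ)) (fun x => κ x ^ (α + 1))
    simpa [Measure.real] using h
  have hint3 : (∫ z, κ z.1 * κ z.2 ^ α ∂(μ.prod μ))
      = (∫ x, κ x ∂μ) * (∫ x, κ x ^ α ∂μ) :=
    integral_prod_mul (μ := μ) (ν := μ) κ (fun x => κ x ^ α)
  have hint4 : (∫ z, κ z.2 * κ z.1 ^ α ∂(μ.prod μ))
      = (∫ x, κ x ^ α ∂μ) * (∫ x, κ x ∂μ) := by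
    have h := integral_prod_mul (μ := μ) (ν := μ) (fun x => κ x ^ α) κ
    rw [← h]
    congr 1; ext z; ring
  have e0 : (∫ z, G z ∂(μ.prod μ))
      = (∫ z, (κ z.1 ^ (α + 1) * 1 + 1 * κ z.2 ^ (α + 1)) ∂(μ.prod μ))
        - (∫ z, (κ z.1 * κ z.2 ^ α + κ z.2 * κ z.1 ^ α) ∂(μ.prod μ)) :=
    integral_sub (hG1.add hG2) (hG3.add hG4)
  have e1 : (∫ z, (κ z.1 ^ (α + 1) * 1 + 1 * κ z.2 ^ (α + 1)) ∂(μ.prod μ))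
      = (∫ z, κ z.1 ^ (α + 1) * 1 ∂(μ.prod μ))
        + (∫ z, 1 * κ z.2 ^ (α + 1) ∂(μ.prod μ)) := integral_add hG1 hG2
  have e2 : (∫ z, (κ z.1 * κ z.2 ^ α + κ z.2 * κ z.1 ^ α) ∂(μ.prod μ))
      = (∫ z, κ z.1 * κ z.2 ^ α ∂(μ.prod μ))
        + (∫ z, κ z.2 * κ z.1 ^ α ∂(μ.prod μ)) := integral_add hG3 hG4
  have hGint : (∫ z, G z ∂(μ.prod μ)) = 0 := by
    rw [e0, e1, e2, hint1, hint2, hint3, hint4]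
    rw [mul_comm] at heq
    linarith [heq]
  have hFint : (∫ z, F z ∂(μ.prod μ)) = 0 := by
    rw [integral_congr_ae hFG, hGint]
  -- F ≤ 0 a.e.
  have hFnonpos : ∀ᵐ z ∂(μ.prod μ), F z ≤ 0 := by
    filter_upwards [hpos1, hpos2] with z h1 h2
    rcases lt_trichotomy (κ z.1) (κ z.2) with h | h | h
    · have : κ z.2 ^ α < κ z.1 ^ α := Real.rpow_lt_rpow_of_neg h1 h hα
      exact mul_nonpos_of_nonpos_of_nonneg (by linarith) (by linarith)
    · simp [hF, h]
    · have : κ z.1 ^ α < κ z.2 ^ α := Real.rpow_lt_rpow_of_neg h2 h hα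
      exact mul_nonpos_of_nonneg_of_nonpos (by linarith) (by linarith)
  -- hence F = 0 a.e.
  have hFzero : ∀ᵐ z ∂(μ.prod μ), F z = 0 := by
    have hneg : (∫ z, (fun w => -F w) z ∂(μ.prod μ)) = 0 := by
      rw [integral_neg, hFint, neg_zero]
    have := (integral_eq_zero_iff_of_nonneg_ae
      (f := fun w => -F w) (by filter_upwards [hFnonpos] with z hz; simpa using hz)
      hFi.neg).mp hneg
    filter_upwards [this] with z hz
    have : -F z = 0 := hz
    linarith
  -- F z = 0 with positivity gives κ z.1 = κ z.2
  have hkey : ∀ᵐ z ∂(μ.prod μ), κ z.1 = κ z.2 := by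
    filter_upwards [hFzero, hpos1, hpos2] with z hz h1 h2
    by_contra hne
    rcases lt_or_gt_of_ne hne with h | h
    · have h' : κ z.2 ^ α < κ z.1 ^ α := Real.rpow_lt_rpow_of_neg h1 h hα
      have : F z < 0 := mul_neg_of_neg_of_pos (by linarith) (by linarith)
      linarith
    · have h' : κ z.1 ^ α < κ z.2 ^ α := Real.rpow_lt_rpow_of_neg h2 h hα
      have : F z < 0 := mul_neg_of_pos_of_neg (by linarith) (by linarith)
      linarith
  have hae : ∀ᵐ x ∂μ, ∀ᵐ y ∂μ, κ x = κ y :=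
    Measure.ae_ae_of_ae_prod hkey
  obtain ⟨x₀, hx₀⟩ := hae.exists
  exact ⟨κ x₀, by filter_upwards [hx₀] with y hy using hy.symm⟩
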